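/- Let G be a finite abelian group with an element c of order 2, and write G = G₂ × G' with G₂ the 2-Sylow subgroup (so c ∈ G₂) and G' of odd order. A Z₂[G]₋-module B is projective over Z₂[G]₋ if and only if B is projective as a module over the subring Z₂[G₂]₋. -/

import Mathlib

/-!
Statement 6: Let `G = G₂ × G'` with `G₂` a finite abelian 2-group, `G'` finite abelian of
odd order, and `c ∈ G₂` of order 2.  A `ℤ₂[G]₋`-module `B` is projective over `ℤ₂[G]₋`
iff it is projective over the subring `ℤ₂[G₂]₋` (via the natural inclusion).
-/

noncomputable section

/-- The "minus" group ring `A[G]/(1 + c)`. -/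
def negGroupRing (A : Type*) [CommRing A] (G : Type*) [CommGroup G] (c : G) : Type _ :=
  MonoidAlgebra A G ⧸ (Ideal.span {1 + MonoidAlgebra.of A G c} : Ideal (MonoidAlgebra A G))

instance (A : Type*) [CommRing A] (G : Type*) [CommGroup G] (c : G) :
    CommRing (negGroupRing A G c) := by unfold negGroupRing; infer_instance

instance (A : Type*) [CommRing A] (G : Type*) [CommGroup G] (c : G) :
    Algebra A (negGroupRing A G c) := by unfold negGroupRing; infer_instance

/-- The class of a group element in the minus group ring. -/
def negGroupRing.mkOf (A : Type*) [CommRing A] {G : Type*} [CommGroup G] (c : G) (g : G) :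
    negGroupRing A G c :=
  Ideal.Quotient.mk _ (MonoidAlgebra.of A G g)

namespace NegAux

open MonoidAlgebra

variable {G₂ G' : Type} [CommGroup G₂] [CommGroup G'] {c : G₂}

lemma mkOf_mul {G : Type} [CommGroup G] (c g h : G) :
    negGroupRing.mkOf ℤ_[2] c (g * h) =
      negGroupRing.mkOf ℤ_[2] c g * negGroupRing.mkOf ℤ_[2] c h := by
  unfold negGroupRing.mkOf
  rw [map_mul (MonoidAlgebra.of ℤ_[2] G), map_mul (Ideal.Quotient.mk _)]
  rfl

lemma mkOf_one {G : Type} [CommGroup G] (c : G) :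
    negGroupRing.mkOf ℤ_[2] c (1 : G) = 1 := by
  simp [negGroupRing.mkOf, ← MonoidAlgebra.one_def]
  rfl

/-- The monoid hom underlying the forward map. -/
def fwdMon (c : G₂) : (G₂ × G') →* MonoidAlgebra (negGroupRing ℤ_[2] G₂ c) G' where
  toFun p := MonoidAlgebra.single p.2 (negGroupRing.mkOf ℤ_[2] c p.1)
  map_one' := by simp [mkOf_one, ← MonoidAlgebra.one_def]
  map_mul' p q := by
    rw [MonoidAlgebra.single_mul_single]
    simp [mkOf_mul]

lemma fwdAux_vanish (c : G₂) (a : MonoidAlgebra ℤ_[2] (G₂ × G'))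
    (ha : a ∈ (Ideal.span {1 + MonoidAlgebra.of ℤ_[2] (G₂ × G') (c, 1)} :
      Ideal (MonoidAlgebra ℤ_[2] (G₂ × G')))) :
    MonoidAlgebra.lift ℤ_[2] _ (G₂ × G') (fwdMon c) a = 0 := by
  rw [Ideal.mem_span_singleton] at ha
  obtain ⟨x, rfl⟩ := ha
  rw [map_mul]
  convert zero_mul _
  have h1 : (MonoidAlgebra.lift ℤ_[2] _ (G₂ × G') (fwdMon c))
      (MonoidAlgebra.of ℤ_[2] (G₂ × G') (c, 1)) = MonoidAlgebra.single (1 : G')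
        (negGroupRing.mkOf ℤ_[2] c c) := by
    rw [MonoidAlgebra.lift_of]; rfl
  rw [map_add, map_one, h1, MonoidAlgebra.one_def, ← MonoidAlgebra.single_add]
  have : (1 : negGroupRing ℤ_[2] G₂ c) + negGroupRing.mkOf ℤ_[2] c c = 0 := by
    show Ideal.Quotient.mk (Ideal.span {1 + MonoidAlgebra.of ℤ_[2] G₂ c})
      (1 + MonoidAlgebra.of ℤ_[2] G₂ c) = 0
    rw [Ideal.Quotient.eq_zero_iff_mem]
    exact Ideal.subset_span rfl
  rw [this, MonoidAlgebra.single_zero]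

/-- Forward map `R → T`. -/
def fwd (c : G₂) :
    negGroupRing ℤ_[2] (G₂ × G') (c, 1) →ₐ[ℤ_[2]] MonoidAlgebra (negGroupRing ℤ_[2] G₂ c) G' :=
  Ideal.Quotient.liftₐ _ (MonoidAlgebra.lift ℤ_[2] _ (G₂ × G') (fwdMon c)) (fwdAux_vanish c)

lemma fwd_mkOf (c : G₂) (g : G₂) (h : G') :
    fwd c (negGroupRing.mkOf ℤ_[2] ((c,1) : G₂ × G') (g, h)) =
      MonoidAlgebra.single h (negGroupRing.mkOf ℤ_[2] c g) := by
  show Ideal.Quotient.liftₐ _ _ _ (Ideal.Quotient.mk _ _) = _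
  rw [Ideal.Quotient.liftₐ_apply]
  exact MonoidAlgebra.lift_of _ _


/-- The monoid hom underlying the inverse map. -/
def bwdMon (c : G₂) : G' →* negGroupRing ℤ_[2] (G₂ × G') (c, 1) where
  toFun h := negGroupRing.mkOf ℤ_[2] ((c,1) : G₂ × G') (1, h)
  map_one' := mkOf_one _
  map_mul' h h' := by rw [← mkOf_mul]; norm_num

variable (G')

/-- The inverse ring hom `T → R`. -/
def bwd (φ : negGroupRing ℤ_[2] G₂ c →ₐ[ℤ_[2]] negGroupRing ℤ_[2] (G₂ × G') (c, 1)) :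
    MonoidAlgebra (negGroupRing ℤ_[2] G₂ c) G' →+* negGroupRing ℤ_[2] (G₂ × G') (c, 1) :=
  letI : Algebra (negGroupRing ℤ_[2] G₂ c) (negGroupRing ℤ_[2] (G₂ × G') (c, 1)) :=
    φ.toRingHom.toAlgebra
  (MonoidAlgebra.lift (negGroupRing ℤ_[2] G₂ c)
    (negGroupRing ℤ_[2] (G₂ × G') (c, 1)) G' (bwdMon c)).toRingHom

variable {G'}

lemma bwd_single (φ : negGroupRing ℤ_[2] G₂ c →ₐ[ℤ_[2]] negGroupRing ℤ_[2] (G₂ × G') (c, 1))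
    (h : G') (s : negGroupRing ℤ_[2] G₂ c) :
    bwd G' φ (MonoidAlgebra.single h s) =
      φ s * negGroupRing.mkOf ℤ_[2] ((c,1) : G₂ × G') (1, h) := by
  letI : Algebra (negGroupRing ℤ_[2] G₂ c) (negGroupRing ℤ_[2] (G₂ × G') (c, 1)) :=
    φ.toRingHom.toAlgebra
  show (MonoidAlgebra.lift (negGroupRing ℤ_[2] G₂ c)
    (negGroupRing ℤ_[2] (G₂ × G') (c, 1)) G' (bwdMon c)) (MonoidAlgebra.single h s) = _
  rw [MonoidAlgebra.lift_single, Algebra.smul_def]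
  rfl

lemma fwd_phi (φ : negGroupRing ℤ_[2] G₂ c →ₐ[ℤ_[2]] negGroupRing ℤ_[2] (G₂ × G') (c, 1))
    (hφ : ∀ g : G₂, φ (negGroupRing.mkOf ℤ_[2] c g) =
      negGroupRing.mkOf ℤ_[2] ((c, 1) : G₂ × G') (g, 1))
    (s : negGroupRing ℤ_[2] G₂ c) :
    fwd (G' := G') c (φ s) = MonoidAlgebra.single (1 : G') s := by
  have : (fwd (G' := G') c).comp φ =
      (MonoidAlgebra.singleOneAlgHom :
        negGroupRing ℤ_[2] G₂ c →ₐ[ℤ_[2]] MonoidAlgebra (negGroupRing ℤ_[2] G₂ c) G') := by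
    apply Ideal.Quotient.algHom_ext
    apply MonoidAlgebra.algHom_ext
    intro x
    show fwd c (φ (negGroupRing.mkOf ℤ_[2] c x)) = _
    rw [hφ, fwd_mkOf]
    rfl
    exact Subsingleton.elim _ _
  have := DFunLike.congr_fun this s
  simpa using this

lemma fwd_bwd (φ : negGroupRing ℤ_[2] G₂ c →ₐ[ℤ_[2]] negGroupRing ℤ_[2] (G₂ × G') (c, 1))
    (hφ : ∀ g : G₂, φ (negGroupRing.mkOf ℤ_[2] c g) =
      negGroupRing.mkOf ℤ_[2] ((c, 1) : G₂ × G') (g, 1))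
    (t : MonoidAlgebra (negGroupRing ℤ_[2] G₂ c) G') :
    fwd c (bwd G' φ t) = t := by
  induction t using MonoidAlgebra.induction_linear with
  | zero => simp
  | add a b ha hb => rw [map_add, map_add, ha, hb]
  | single h s =>
    rw [bwd_single, map_mul, fwd_phi φ hφ, fwd_mkOf, MonoidAlgebra.single_mul_single,
      one_mul, mkOf_one, mul_one]

lemma bwd_fwd (φ : negGroupRing ℤ_[2] G₂ c →ₐ[ℤ_[2]] negGroupRing ℤ_[2] (G₂ × G') (c, 1))
    (hφ : ∀ g : G₂, φ (negGroupRing.mkOf ℤ_[2] c g) =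
      negGroupRing.mkOf ℤ_[2] ((c, 1) : G₂ × G') (g, 1))
    (r : negGroupRing ℤ_[2] (G₂ × G') (c, 1)) :
    bwd G' φ (fwd c r) = r := by
  obtain ⟨x, rfl⟩ := Ideal.Quotient.mk_surjective (I := (Ideal.span
    {1 + MonoidAlgebra.of ℤ_[2] (G₂ × G') ((c,1) : G₂ × G')} :
      Ideal (MonoidAlgebra ℤ_[2] (G₂ × G')))) r
  have : (bwd G' φ).comp (((fwd (G' := G') c) : negGroupRing ℤ_[2] (G₂ × G') (c, 1) →+*
        MonoidAlgebra (negGroupRing ℤ_[2] G₂ c) G').comp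
      (Ideal.Quotient.mk _)) = Ideal.Quotient.mk _ := by
    apply MonoidAlgebra.ringHom_ext
    · intro b
      show bwd G' φ (fwd c (Ideal.Quotient.mk _ (MonoidAlgebra.single 1 b))) = _
      have h1 : (MonoidAlgebra.single (1 : G₂ × G') b : MonoidAlgebra ℤ_[2] (G₂ × G')) =
          b • 1 := by
        rw [MonoidAlgebra.one_def, MonoidAlgebra.smul_single', mul_one]
      rw [h1]
      show bwd G' φ (fwd c ((Ideal.Quotient.mkₐ ℤ_[2] _) (b • 1))) =
        (Ideal.Quotient.mkₐ ℤ_[2] _) (b • 1)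
      have h2 : (Ideal.Quotient.mkₐ ℤ_[2] (Ideal.span
          {1 + MonoidAlgebra.of ℤ_[2] (G₂ × G') ((c,1) : G₂ × G')})) (b • (1 : MonoidAlgebra ℤ_[2] (G₂ × G'))) =
          algebraMap ℤ_[2] (negGroupRing ℤ_[2] (G₂ × G') (c, 1)) b := by
        rw [← Algebra.algebraMap_eq_smul_one]
        exact (Ideal.Quotient.mkₐ ℤ_[2] _).commutes b
      rw [h2, AlgHom.commutes]
      show bwd G' φ (MonoidAlgebra.single 1 (algebraMap ℤ_[2] _ b)) = _
      rw [bwd_single, AlgHom.commutes, Prod.mk_one_one, mkOf_one, mul_one]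
    · intro x
      show bwd G' φ (fwd c (negGroupRing.mkOf ℤ_[2] ((c,1) : G₂ × G') x)) = _
      obtain ⟨g, h⟩ := x
      rw [fwd_mkOf, bwd_single, hφ, ← mkOf_mul]
      norm_num
      rfl
  exact DFunLike.congr_fun this x


/-- The ring isomorphism `T ≃+* R`. -/
def eqv (φ : negGroupRing ℤ_[2] G₂ c →ₐ[ℤ_[2]] negGroupRing ℤ_[2] (G₂ × G') (c, 1))
    (hφ : ∀ g : G₂, φ (negGroupRing.mkOf ℤ_[2] c g) =
      negGroupRing.mkOf ℤ_[2] ((c, 1) : G₂ × G') (g, 1)) :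
    MonoidAlgebra (negGroupRing ℤ_[2] G₂ c) G' ≃+* negGroupRing ℤ_[2] (G₂ × G') (c, 1) where
  toFun := bwd G' φ
  invFun := fwd c
  left_inv := fwd_bwd φ hφ
  right_inv := bwd_fwd φ hφ
  map_mul' := map_mul _
  map_add' := map_add _

lemma isUnit_card {n : ℕ} (hn : Odd n) (c : G₂) :
    IsUnit ((n : negGroupRing ℤ_[2] G₂ c)) := by
  have h2 : IsUnit ((n : ℤ_[2])) := by
    rw [PadicInt.isUnit_iff]
    refine le_antisymm (PadicInt.norm_le_one _) ?_
    by_contra hlt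
    push_neg at hlt
    have : ((n : ℤ) : ℤ_[2]) = ((n : ℕ) : ℤ_[2]) := by push_cast; ring
    rw [← this] at hlt
    have hdvd := (PadicInt.norm_int_lt_one_iff_dvd (p := 2) (n : ℤ)).mp hlt
    have : (2 : ℤ) ∣ (n : ℤ) := by exact_mod_cast hdvd
    rcases hn with ⟨k, hk⟩
    omega
  have := h2.map (algebraMap ℤ_[2] (negGroupRing ℤ_[2] G₂ c))
  rwa [map_natCast] at this


lemma bwd_algebraMap (φ : negGroupRing ℤ_[2] G₂ c →ₐ[ℤ_[2]] negGroupRing ℤ_[2] (G₂ × G') (c, 1))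
    (s : negGroupRing ℤ_[2] G₂ c) :
    bwd G' φ (algebraMap (negGroupRing ℤ_[2] G₂ c)
      (MonoidAlgebra (negGroupRing ℤ_[2] G₂ c) G') s) = φ s := by
  have : algebraMap (negGroupRing ℤ_[2] G₂ c)
      (MonoidAlgebra (negGroupRing ℤ_[2] G₂ c) G') s = MonoidAlgebra.single (1 : G') s := by
    rfl
  rw [this, bwd_single, Prod.mk_one_one, mkOf_one, mul_one]

end NegAux


attribute [local instance] RingHomInvPair.of_ringEquiv
attribute [local instance] RingHomInvPair.of_ringEquiv_symm

theorem projective_iff_projective_over_two_sylow_minus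
    (G₂ G' : Type) [CommGroup G₂] [Fintype G₂] [CommGroup G'] [Fintype G']
    (hG₂ : IsPGroup 2 G₂) (hG' : Odd (Fintype.card G'))
    (c : G₂) (hc : c * c = 1) (hc1 : c ≠ 1)
    (φ : negGroupRing ℤ_[2] G₂ c →ₐ[ℤ_[2]] negGroupRing ℤ_[2] (G₂ × G') (c, 1))
    (hφ : ∀ g : G₂, φ (negGroupRing.mkOf ℤ_[2] c g) = negGroupRing.mkOf ℤ_[2] ((c, 1) : G₂ × G') (g, 1))
    (B : Type) [AddCommGroup B] [Module (negGroupRing ℤ_[2] (G₂ × G') (c, 1)) B] :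
    Module.Projective (negGroupRing ℤ_[2] (G₂ × G') (c, 1)) B ↔
      (letI : Module (negGroupRing ℤ_[2] G₂ c) B := Module.compHom B φ.toRingHom
       Module.Projective (negGroupRing ℤ_[2] G₂ c) B) := by
  classical
  letI mS : Module (negGroupRing ℤ_[2] G₂ c) B := Module.compHom B φ.toRingHom
  letI mT : Module (MonoidAlgebra (negGroupRing ℤ_[2] G₂ c) G') B :=
    Module.compHom B (NegAux.bwd G' φ)
  haveI tower : IsScalarTower (negGroupRing ℤ_[2] G₂ c)
      (MonoidAlgebra (negGroupRing ℤ_[2] G₂ c) G') B := by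
    constructor
    intro s t b
    show NegAux.bwd G' φ (s • t) • b = φ s • (NegAux.bwd G' φ t • b)
    rw [Algebra.smul_def, map_mul, NegAux.bwd_algebraMap]
    exact (inferInstance : Module (negGroupRing ℤ_[2] (G₂ × G') (c, 1)) B).mul_smul
      (φ s) (NegAux.bwd G' φ t) b
  refine ⟨fun hR => ?_, fun hS => ?_⟩
  · -- R-projective → S-projective
    haveI := hR
    haveI hT : Module.Projective (MonoidAlgebra (negGroupRing ℤ_[2] G₂ c) G') B := by
      refine Module.Projective.of_equiv (M := B) (N := B)
          (σ := ((NegAux.eqv φ hφ).symm : negGroupRing ℤ_[2] (G₂ × G') (c, 1) →+* MonoidAlgebra (negGroupRing ℤ_[2] G₂ c) G'))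
          (σ' := ((NegAux.eqv φ hφ) : MonoidAlgebra (negGroupRing ℤ_[2] G₂ c) G' →+* negGroupRing ℤ_[2] (G₂ × G') (c, 1)))
        { toFun := fun b => b, invFun := fun b => b, left_inv := fun _ => rfl,
          right_inv := fun _ => rfl, map_add' := fun _ _ => rfl,
          map_smul' := fun r b => ?_ }
      show r • b = NegAux.bwd G' φ (NegAux.fwd c r) • b
      rw [NegAux.bwd_fwd φ hφ]
    obtain ⟨sec, hsec⟩ := Module.projective_def'.mp hT
    haveI : Module.Free (negGroupRing ℤ_[2] G₂ c)
        (MonoidAlgebra (negGroupRing ℤ_[2] G₂ c) G') :=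
      Module.Free.of_basis (MonoidAlgebra.basis G' (negGroupRing ℤ_[2] G₂ c) :
        Module.Basis G' (negGroupRing ℤ_[2] G₂ c) (MonoidAlgebra (negGroupRing ℤ_[2] G₂ c) G'))
    exact Module.Projective.of_split
      (LinearMap.restrictScalars (negGroupRing ℤ_[2] G₂ c) sec)
      (LinearMap.restrictScalars (negGroupRing ℤ_[2] G₂ c)
        (Finsupp.linearCombination (MonoidAlgebra (negGroupRing ℤ_[2] G₂ c) G') _root_.id))
      (LinearMap.ext fun b => DFunLike.congr_fun hsec b)
  · -- S-projective → R-projective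
    haveI hSB : Module.Projective (negGroupRing ℤ_[2] G₂ c) B := hS
    set T := MonoidAlgebra (negGroupRing ℤ_[2] G₂ c) G' with hT
    set p : (B →₀ T) →ₗ[T] B := Finsupp.linearCombination T _root_.id with hpdef
    obtain ⟨i, hi⟩ := Module.projective_lifting_property
      (p.restrictScalars (negGroupRing ℤ_[2] G₂ c)) LinearMap.id
      (Finsupp.linearCombination_id_surjective T B)
    have key : ∀ b : B, p (i.equivariantProjection G' b) = b := by
      intro b
      rw [LinearMap.equivariantProjection_apply]
      have h1 : ∀ (s : negGroupRing ℤ_[2] G₂ c) (x : B →₀ T), p (s • x) = s • p x :=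
        fun s x => (p.restrictScalars (negGroupRing ℤ_[2] G₂ c)).map_smul s x
      rw [h1, map_sum]
      have h2 : ∀ g : G', p (i.conjugate g b) = b := by
        intro g
        rw [LinearMap.conjugate_apply, map_smul p]
        have h3 : p (i (MonoidAlgebra.single g (1 : negGroupRing ℤ_[2] G₂ c) • b)) =
            MonoidAlgebra.single g (1 : negGroupRing ℤ_[2] G₂ c) • b :=
          DFunLike.congr_fun hi (MonoidAlgebra.single g (1 : negGroupRing ℤ_[2] G₂ c) • b)
        rw [h3, smul_smul, MonoidAlgebra.single_mul_single, inv_mul_cancel, one_mul,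
          ← MonoidAlgebra.one_def, one_smul]
      rw [Finset.sum_congr rfl (fun g _ => h2 g), Finset.sum_const, Finset.card_univ,
        ← Nat.cast_smul_eq_nsmul (negGroupRing ℤ_[2] G₂ c), smul_smul,
        Nat.card_eq_fintype_card, Ring.inverse_mul_cancel _ (NegAux.isUnit_card hG' c), one_smul]
    haveI : Module.Projective T B :=
      Module.Projective.of_split (i.equivariantProjection G') p (LinearMap.ext key)
    exact Module.Projective.of_equiv (M := B) (N := B)
        (σ := ((NegAux.eqv φ hφ) : MonoidAlgebra (negGroupRing ℤ_[2] G₂ c) G' →+* negGroupRing ℤ_[2] (G₂ × G') (c, 1)))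
        (σ' := ((NegAux.eqv φ hφ).symm : negGroupRing ℤ_[2] (G₂ × G') (c, 1) →+* MonoidAlgebra (negGroupRing ℤ_[2] G₂ c) G'))
      { toFun := fun b => b, invFun := fun b => b, left_inv := fun _ => rfl,
        right_inv := fun _ => rfl, map_add' := fun _ _ => rfl,
        map_smul' := fun t b => rfl }

end
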